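/- Let p ≠ 2 and let b, c be matrices over Z/p^μ (b of size m×N, c of size N×m) with cb = 0 (mod p). Then there exists a matrix u of the form u = -1/2 + Σ_{j>0} s_j (cb)^j (s_j dyadic rationals interpreted in Z/p^μ, sum finite by nilpotency of cb) satisfying 2u + 1 = u(cb)u - Σ_{j>0}(cb)^j, and this u is invertible. -/

import Mathlib

open Polynomial Finset

/-- Newton-iteration construction of the polynomial solving the quadratic
equation modulo `X^μ`. -/
lemma stmt14_poly {R : Type*} [CommRing R] (t : R) (h2 : 2 * t = 1) (μ : ℕ) (hμ : 1 ≤ μ) :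
    ∃ P : R[X], P.coeff 0 = -t ∧
      (X : R[X]) ^ μ ∣ (X * P ^ 2 - (∑ j ∈ Finset.Icc 1 μ, X ^ j) - C 2 * P - 1) := by
  set Q : R[X] := ∑ j ∈ Finset.Icc 1 μ, X ^ j with hQ
  set f : R[X] → R[X] := fun q => C t * (X * q ^ 2 - 1 - Q) with hf
  have hQ0 : Q.coeff 0 = 0 := by
    rw [hQ, finset_sum_coeff]
    refine Finset.sum_eq_zero fun j hj => ?_
    simp only [Finset.mem_Icc] at hj
    rw [coeff_X_pow, if_neg (by omega)]
  have hconst : ∀ q : R[X], (f q).coeff 0 = -t := by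
    intro q
    simp [hf, coeff_mul_C, mul_comm, hQ0, coeff_X_mul_zero]
  have hstep : ∀ k : ℕ, (X : R[X]) ^ k ∣ f^[k + 1] 0 - f^[k] 0 := by
    intro k
    induction k with
    | zero => simp
    | succ k ih =>
      obtain ⟨r, hr⟩ := ih
      refine ⟨C t * (f^[k + 1] 0 + f^[k] 0) * r, ?_⟩
      have e1 : f^[k + 1 + 1] 0 = C t * (X * (f^[k + 1] 0) ^ 2 - 1 - Q) := by
        rw [Function.iterate_succ_apply']
      have e2 : f^[k + 1] 0 = C t * (X * (f^[k] 0) ^ 2 - 1 - Q) := by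
        rw [Function.iterate_succ_apply']
      linear_combination e1 - e2 + (C t * X * (f^[k + 1] 0 + f^[k] 0)) * hr
  refine ⟨f^[μ] 0, ?_, ?_⟩
  · obtain ⟨ν, rfl⟩ : ∃ ν, μ = ν + 1 := ⟨μ - 1, by omega⟩
    rw [Function.iterate_succ_apply']
    exact hconst _
  · obtain ⟨r, hr⟩ := hstep μ
    have e : f^[μ + 1] 0 = C t * (X * (f^[μ] 0) ^ 2 - 1 - Q) := by
      rw [Function.iterate_succ_apply']
    have h2' : (C 2 : R[X]) * C t = 1 := by rw [← C_mul, h2, C_1]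
    refine ⟨C 2 * r, ?_⟩
    linear_combination C 2 * hr - C 2 * e - (X * (f^[μ] 0) ^ 2 - 1 - Q) * h2'

theorem stmt14 {p : ℕ} (hp : p.Prime) (hp2 : p ≠ 2) {μ : ℕ} (hμ : 1 ≤ μ) {m N : ℕ}
    (b : Matrix (Fin m) (Fin N) (ZMod (p ^ μ))) (c : Matrix (Fin N) (Fin m) (ZMod (p ^ μ)))
    (hcb : (c * b).map (ZMod.castHom (dvd_pow_self p (by omega : μ ≠ 0)) (ZMod p)) = 0) :
    ∃ u : Matrix (Fin N) (Fin N) (ZMod (p ^ μ)),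
      (∃ (σ : ℕ → ℤ) (n : ℕ → ℕ),
        u = -((2 : ZMod (p ^ μ))⁻¹ • (1 : Matrix (Fin N) (Fin N) (ZMod (p ^ μ)))) +
          ∑ j ∈ Finset.Icc 1 μ,
            (((σ j : ZMod (p ^ μ))) * ((2 : ZMod (p ^ μ))⁻¹) ^ (n j)) • (c * b) ^ j) ∧
      (2 : ZMod (p ^ μ)) • u + 1 = u * (c * b) * u - ∑ j ∈ Finset.Icc 1 μ, (c * b) ^ j ∧
      IsUnit u := by
  haveI : Fact p.Prime := ⟨hp⟩
  haveI : NeZero (p ^ μ) := ⟨pow_ne_zero _ hp.pos.ne'⟩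
  set A : Matrix (Fin N) (Fin N) (ZMod (p ^ μ)) := c * b with hA
  -- 2 is a unit
  have h2unit : IsUnit (2 : ZMod (p ^ μ)) := by
    have : Nat.Coprime 2 (p ^ μ) :=
      Nat.Coprime.pow_right _ (((Nat.coprime_primes Nat.prime_two hp).mpr (Ne.symm hp2)))
    simpa using (ZMod.isUnit_iff_coprime 2 (p ^ μ)).mpr this
  set t : ZMod (p ^ μ) := (2 : ZMod (p ^ μ))⁻¹ with ht
  have h2t : (2 : ZMod (p ^ μ)) * t = 1 := ZMod.mul_inv_of_unit _ h2unit
  -- A is p times a matrix, hence A ^ μ = 0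
  have hAμ : A ^ μ = 0 := by
    have hent : ∀ i j, ∃ y : ZMod (p ^ μ), A i j = (p : ZMod (p ^ μ)) * y := by
      intro i j
      have h0 : ((c * b).map (ZMod.castHom (dvd_pow_self p (by omega : μ ≠ 0)) (ZMod p))) i j
          = (0 : Matrix (Fin N) (Fin N) (ZMod p)) i j := by rw [hcb]
      rw [Matrix.map_apply, Matrix.zero_apply] at h0
      have hval : A i j = (((A i j).val : ℕ) : ZMod (p ^ μ)) := by
        rw [ZMod.natCast_val, ZMod.cast_id]
      rw [← hA] at h0
      rw [hval, map_natCast] at h0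
      have hdvd : p ∣ (A i j).val := (ZMod.natCast_eq_zero_iff _ _).mp h0
      obtain ⟨k, hk⟩ := hdvd
      exact ⟨(k : ZMod (p ^ μ)), by rw [hval, hk]; push_cast; ring⟩
    set B : Matrix (Fin N) (Fin N) (ZMod (p ^ μ)) :=
      Matrix.of (fun i j => (hent i j).choose) with hB
    have hAB : A = (p : ZMod (p ^ μ)) • B := by
      ext i j
      simpa [hB, Matrix.smul_apply, smul_eq_mul] using (hent i j).choose_spec
    rw [hAB, _root_.smul_pow]
    have hp0 : ((p : ZMod (p ^ μ))) ^ μ = 0 := by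
      rw [← Nat.cast_pow, ZMod.natCast_self]
    rw [hp0, zero_smul]
  obtain ⟨P, hP0, r, hr⟩ := stmt14_poly t h2t μ hμ
  set u : Matrix (Fin N) (Fin N) (ZMod (p ^ μ)) := aeval A P with hu
  -- powers of A at least μ vanish
  have hApow : ∀ j, μ ≤ j → A ^ j = 0 := by
    intro j hj
    have : A ^ j = A ^ μ * A ^ (j - μ) := by rw [← pow_add]; congr 1; omega
    rw [this, hAμ, zero_mul]
  -- expression of u as a sum
  have husum : u = (-t) • (1 : Matrix (Fin N) (Fin N) (ZMod (p ^ μ)))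
      + ∑ j ∈ Finset.Icc 1 μ, (P.coeff j) • A ^ j := by
    have hn : P.natDegree < P.natDegree + μ + 1 := by omega
    rw [hu, aeval_eq_sum_range' hn]
    have hsplit : Finset.range (P.natDegree + μ + 1)
        = Finset.range (μ + 1) ∪ Finset.Ico (μ + 1) (P.natDegree + μ + 1) := by
      ext x
      simp only [Finset.mem_range, Finset.mem_union, Finset.mem_Ico]
      omega
    have hdisj : Disjoint (Finset.range (μ + 1))
        (Finset.Ico (μ + 1) (P.natDegree + μ + 1)) := by
      rw [Finset.disjoint_left]
      intro a ha hb
      simp only [Finset.mem_range, Finset.mem_Ico] at ha hb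
      omega
    rw [hsplit, Finset.sum_union hdisj]
    have hzero : ∑ i ∈ Finset.Ico (μ + 1) (P.natDegree + μ + 1), P.coeff i • A ^ i = 0 := by
      refine Finset.sum_eq_zero fun i hi => ?_
      simp only [Finset.mem_Ico] at hi
      rw [hApow i (by omega), smul_zero]
    rw [hzero, add_zero]
    have hins : Finset.range (μ + 1) = insert 0 (Finset.Icc 1 μ) := by
      ext x
      simp only [Finset.mem_range, Finset.mem_insert, Finset.mem_Icc]
      omega
    rw [hins, Finset.sum_insert (by simp)]
    simp [hP0]
  have hform : ∃ (σ : ℕ → ℤ) (n : ℕ → ℕ),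
      u = -((2 : ZMod (p ^ μ))⁻¹ • (1 : Matrix (Fin N) (Fin N) (ZMod (p ^ μ)))) +
        ∑ j ∈ Finset.Icc 1 μ,
          (((σ j : ZMod (p ^ μ))) * ((2 : ZMod (p ^ μ))⁻¹) ^ (n j)) • A ^ j := by
    refine ⟨fun j => ((P.coeff j).val : ℤ), fun _ => 0, ?_⟩
    rw [husum, ← ht]
    congr 1
    · rw [neg_smul]
    · refine Finset.sum_congr rfl fun j _ => ?_
      congr 1
      rw [pow_zero, mul_one]
      push_cast
      rw [ZMod.natCast_val, ZMod.cast_id]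
  -- the equation
  have hcomm : u * A = A * u := by
    have h1 : aeval A (P * X) = u * A := by rw [map_mul, aeval_X, ← hu]
    have h2 : aeval A (X * P) = A * u := by rw [map_mul, aeval_X, ← hu]
    rw [← h1, ← h2, mul_comm P X]
  have happ := congrArg (aeval A) hr
  simp only [map_sub, map_mul, map_pow, map_one, map_sum, aeval_X, aeval_C,
    aeval_X_pow] at happ
  rw [hAμ, zero_mul, ← hu] at happ
  have halg : (algebraMap (ZMod (p ^ μ)) (Matrix (Fin N) (Fin N) (ZMod (p ^ μ)))) 2 * u
      = (2 : ZMod (p ^ μ)) • u := (Algebra.smul_def _ _).symm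
  rw [halg] at happ
  rw [sub_sub, sub_sub, sub_eq_zero] at happ
  have heq : (2 : ZMod (p ^ μ)) • u + 1 = u * A * u - ∑ j ∈ Finset.Icc 1 μ, A ^ j := by
    have hmain : u * A * u = A * u ^ 2 := by rw [hcomm, sq, mul_assoc]
    rw [hmain, eq_sub_iff_add_eq, happ]
    abel
  -- invertibility
  have hnilp : IsNilpotent (∑ j ∈ Finset.Icc 1 μ, (P.coeff j) • A ^ j) := by
    have hform2 : ∑ j ∈ Finset.Icc 1 μ, (P.coeff j) • A ^ j
        = A * ∑ j ∈ Finset.Icc 1 μ, (P.coeff j) • A ^ (j - 1) := by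
      rw [Finset.mul_sum]
      refine Finset.sum_congr rfl fun j hj => ?_
      simp only [Finset.mem_Icc] at hj
      rw [mul_smul_comm, ← pow_succ']
      congr 2
      omega
    rw [hform2]
    have hcv : Commute A (∑ j ∈ Finset.Icc 1 μ, (P.coeff j) • A ^ (j - 1)) := by
      refine Commute.sum_right _ _ _ fun j _ => ?_
      exact (Commute.pow_right (Commute.refl A) _).smul_right _
    exact ⟨μ, by rw [hcv.mul_pow, hAμ, zero_mul]⟩
  have hunitc : IsUnit ((-t) • (1 : Matrix (Fin N) (Fin N) (ZMod (p ^ μ)))) := by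
    have hts : IsUnit (-t) := by
      refine IsUnit.of_mul_eq_one (a := -t) (-2) ?_
      rw [neg_mul_neg, mul_comm, h2t]
    have := hts.map (algebraMap (ZMod (p ^ μ)) (Matrix (Fin N) (Fin N) (ZMod (p ^ μ))))
    rwa [Algebra.algebraMap_eq_smul_one] at this
  have huunit : IsUnit u := by
    rw [husum]
    exact IsNilpotent.isUnit_add_left_of_commute hnilp hunitc
      ((Commute.one_right _).smul_right _)
  exact ⟨u, hform, heq, huunit⟩
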